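/- For finitely many Bohr sets B⁽¹⁾,…,B⁽ᵏ⁾ in a finite abelian group G, the intersection Bohr set satisfies μ_G((⋀ᵢ B⁽ⁱ⁾)₁) ≥ ∏ᵢ μ_G(B⁽ⁱ⁾_{1/2}), where B_ρ denotes dilation of the width function by ρ and ⋀ is the Bohr set with the union of frequency sets and pointwise minimum of width functions. -/

import Mathlib

open Finset

/-- The Bohr set with frequency set `Γ`, width function `δ`, dilated by `ρ`. -/
def bohr {G : Type} [AddCommGroup G] (Γ : Finset (AddChar G ℂ))
    (δ : AddChar G ℂ → ℝ) (ρ : ℝ) : Set G :=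
  {x | ∀ γ ∈ Γ, ‖1 - γ x‖ ≤ min (ρ * δ γ) 2}

lemma sub_mem_bohr {G : Type} [AddCommGroup G] [Fintype G] {Γ : Finset (AddChar G ℂ)}
    {δ : AddChar G ℂ → ℝ} {x y : G} (hx : x ∈ bohr Γ δ (1/2)) (hy : y ∈ bohr Γ δ (1/2)) :
    x - y ∈ bohr Γ δ 1 := by
  intro γ hγ
  have h1 := hx γ hγ
  have h2 := hy γ hγ
  have hny : ‖γ y‖ = 1 := γ.norm_apply y
  have hy0 : γ y ≠ 0 := by
    intro h; rw [h] at hny; simp at hny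
  have key : ‖1 - γ (x - y)‖ = ‖γ y - γ x‖ := by
    have : γ (x - y) = γ x / γ y := by
      rw [sub_eq_add_neg, AddChar.map_add_eq_mul, AddChar.map_neg_eq_inv, div_eq_mul_inv]
    rw [this]
    have : 1 - γ x / γ y = (γ y - γ x) / γ y := by field_simp
    rw [this, norm_div, hny, div_one]
  refine le_min ?_ ?_
  · rw [key, one_mul]
    calc ‖γ y - γ x‖ ≤ ‖γ y - 1‖ + ‖1 - γ x‖ := by
          have := norm_sub_le_norm_sub_add_norm_sub (γ y) 1 (γ x); simpa using this
      _ ≤ 1/2 * δ γ + 1/2 * δ γ := by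
          refine add_le_add ?_ (h1.trans (min_le_left _ _))
          rw [← norm_neg, neg_sub]
          exact h2.trans (min_le_left _ _)
      _ = δ γ := by ring
  · have h3 : ‖γ (x - y)‖ = 1 := γ.norm_apply _
    have h4 := norm_sub_le (1 : ℂ) (γ (x - y))
    calc ‖1 - γ (x - y)‖ ≤ ‖(1:ℂ)‖ + ‖γ (x - y)‖ := h4
      _ ≤ 2 := by rw [h3, norm_one]; norm_num

/-- Intersections of Bohr sets are large: the meet (union of frequency sets, pointwise
minimum of width functions) at dilation 1 is exactly the intersection of the Bohr sets. -/
theorem bohr_intersection (G : Type) [AddCommGroup G] [Fintype G] (k : ℕ)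
    (Γ : Fin k → Finset (AddChar G ℂ)) (δ : Fin k → AddChar G ℂ → ℝ)
    (hδ : ∀ i, ∀ γ ∈ Γ i, 0 < δ i γ ∧ δ i γ ≤ 2) :
    ∏ i, (((bohr (Γ i) (δ i) (1/2)).ncard : ℝ) / Fintype.card G) ≤
      ((⋂ i, bohr (Γ i) (δ i) 1).ncard : ℝ) / Fintype.card G := by
  classical
  have hn : (0 : ℝ) < Fintype.card G := by
    exact_mod_cast Fintype.card_pos
  rcases Nat.eq_zero_or_pos k with hk | hk
  · subst hk
    simp only [Finset.univ_eq_empty, Finset.prod_empty, Set.iInter_of_empty, Set.ncard_univ,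
      Nat.card_eq_fintype_card]
    rw [div_self hn.ne']
  -- main case
  set n := Fintype.card G with hndef
  set A : Fin k → Finset G := fun i => (bohr (Γ i) (δ i) (1/2)).toFinset with hA
  set C : Finset G := (⋂ i, bohr (Γ i) (δ i) 1).toFinset with hC
  have hncA : ∀ i, (bohr (Γ i) (δ i) (1/2)).ncard = (A i).card := fun i =>
    Set.ncard_eq_toFinset_card' _
  have hncC : (⋂ i, bohr (Γ i) (δ i) 1).ncard = C.card := Set.ncard_eq_toFinset_card' _
  -- key combinatorial claim
  have key : ∏ i, (A i).card ≤ C.card * n ^ (k - 1) := by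
    set T : Finset (Fin k → G) := Fintype.piFinset A with hT
    have hprod : ∏ i, #(A i) = #T := by rw [hT, Fintype.card_piFinset]
    rcases T.eq_empty_or_nonempty with hTe | hTne
    · rw [hprod, hTe]; simp
    set i0 : Fin k := ⟨0, hk⟩
    set f : (Fin k → G) → (Fin k → G) := fun a i => a i - a i0 with hf
    set I : Finset (Fin k → G) := T.image f with hI
    -- bound on I.card
    have hIcard : I.card ≤ n ^ (k - 1) := by
      have hsub : I ⊆ Fintype.piFinset (fun i => if i = i0 then ({0} : Finset G) else univ) := by
        intro g hg
        rw [hI, Finset.mem_image] at hg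
        obtain ⟨a, _, rfl⟩ := hg
        rw [Fintype.mem_piFinset]
        intro i
        by_cases h : i = i0 <;> simp [hf, h]
      calc I.card ≤ _ := Finset.card_le_card hsub
        _ = n ^ (k - 1) := by
            rw [Fintype.card_piFinset]
            rw [← Finset.mul_prod_erase univ
              (fun i => #(if i = i0 then ({0} : Finset G) else univ)) (mem_univ i0)]
            have h1 : ∀ i ∈ univ.erase i0,
                #(if i = i0 then ({0} : Finset G) else univ) = n := by
              intro i hi
              rw [if_neg (Finset.ne_of_mem_erase hi), Finset.card_univ]
            rw [Finset.prod_congr rfl h1, Finset.prod_const, if_pos rfl,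
              Finset.card_singleton, one_mul, Finset.card_erase_of_mem (mem_univ i0),
              Finset.card_univ, Fintype.card_fin]
      -- fallthrough
    -- choose fiber of max size
    have hIne : I.Nonempty := hTne.image f
    obtain ⟨y, hyI, hymax⟩ := I.exists_max_image (fun y => (T.filter (fun a => f a = y)).card) hIne
    set F : Finset (Fin k → G) := T.filter (fun a => f a = y) with hF
    have hTcard : T.card ≤ I.card * F.card := by
      rw [Finset.card_eq_sum_card_fiberwise (f := f) (t := I)
        (fun a ha => Finset.mem_image_of_mem f ha)]
      calc ∑ z ∈ I, (T.filter (fun a => f a = z)).card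
          ≤ ∑ _z ∈ I, F.card := Finset.sum_le_sum (fun z hz => hymax z hz)
        _ = I.card * F.card := by rw [Finset.sum_const, smul_eq_mul]
    -- D = set of a i0 values
    set D : Finset G := F.image (fun a => a i0) with hD
    have hDcard : D.card = F.card := by
      rw [hD]
      apply Finset.card_image_of_injOn
      intro a ha b hb hab
      simp only [hF, Finset.mem_coe, Finset.mem_filter] at ha hb
      have hab2 : a i0 = b i0 := hab
      funext i
      have h1 : a i - a i0 = y i := congrFun ha.2 i
      have h2 : b i - b i0 = y i := congrFun hb.2 i
      have : a i - a i0 = b i - b i0 := h1.trans h2.symm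
      calc a i = (a i - a i0) + a i0 := by abel
        _ = (b i - b i0) + b i0 := by rw [this, hab2]
        _ = b i := by abel
    -- F nonempty
    have hFne : F.Nonempty := by
      rw [hI, Finset.mem_image] at hyI
      obtain ⟨a, ha, hfa⟩ := hyI
      exact ⟨a, Finset.mem_filter.mpr ⟨ha, hfa⟩⟩
    obtain ⟨b0, hb0⟩ := hFne
    set d0 : G := b0 i0 with hd0
    set E : Finset G := D.image (fun d => d - d0) with hE
    have hEcard : E.card = D.card :=
      Finset.card_image_of_injective _ (sub_left_injective)
    have hEC : E ⊆ C := by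
      intro x hx
      rw [hE, Finset.mem_image] at hx
      obtain ⟨d, hd, rfl⟩ := hx
      rw [hD, Finset.mem_image] at hd
      obtain ⟨a, ha, rfl⟩ := hd
      rw [hC, Set.mem_toFinset, Set.mem_iInter]
      intro i
      simp only [hF, Finset.mem_filter] at ha hb0
      have h1 : a i - a i0 = y i := congrFun ha.2 i
      have h2 : b0 i - b0 i0 = y i := congrFun hb0.2 i
      have heq : a i0 - d0 = a i - b0 i := by
        rw [hd0]
        have h3 : a i - a i0 = b0 i - b0 i0 := h1.trans h2.symm
        exact (sub_eq_sub_iff_sub_eq_sub.mp h3).symm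
      rw [heq]
      have hai : a i ∈ bohr (Γ i) (δ i) (1/2) := by
        have := Fintype.mem_piFinset.mp ha.1 i
        rwa [hA, Set.mem_toFinset] at this
      have hbi : b0 i ∈ bohr (Γ i) (δ i) (1/2) := by
        have := Fintype.mem_piFinset.mp hb0.1 i
        rwa [hA, Set.mem_toFinset] at this
      exact sub_mem_bohr hai hbi
    calc ∏ i, (A i).card = T.card := hprod
      _ ≤ I.card * F.card := hTcard
      _ ≤ n ^ (k-1) * F.card := Nat.mul_le_mul_right _ hIcard
      _ = n ^ (k-1) * E.card := by rw [hEcard, hDcard]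
      _ ≤ n ^ (k-1) * C.card := Nat.mul_le_mul_left _ (Finset.card_le_card hEC)
      _ = C.card * n ^ (k-1) := Nat.mul_comm _ _
  -- conclude over the reals
  simp only [hncA, hncC]
  have hcast : (∏ i, ((A i).card : ℝ)) ≤ (C.card : ℝ) * (n : ℝ) ^ (k - 1) := by
    exact_mod_cast key
  calc ∏ i, ((A i).card : ℝ) / (n : ℝ)
      = (∏ i, ((A i).card : ℝ)) / (n : ℝ) ^ k := by
        rw [Finset.prod_div_distrib, Finset.prod_const, Finset.card_univ, Fintype.card_fin]
    _ ≤ ((C.card : ℝ) * (n : ℝ) ^ (k - 1)) / (n : ℝ) ^ k := by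
        exact div_le_div_of_nonneg_right hcast (by positivity)
    _ = (C.card : ℝ) / (n : ℝ) := by
        have hk1 : (n : ℝ) ^ k = (n : ℝ) ^ (k - 1) * n := by
          rw [← pow_succ]
          congr 1
          omega
        rw [hk1, div_eq_div_iff (by positivity) hn.ne']
        ring
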